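/- Let W_0 < W_1 < … < W_n be a strictly increasing sequence of natural numbers, and for 1 ≤ i ≤ n let p_i = Nat.log2 (W_{i−1} XOR W_i) be the position of the most significant bit in which the binary representations of W_{i−1} and W_i differ. Then for all 1 ≤ i < j ≤ n with p_i = p_j, there exists k with i < k < j and p_k > p_i. -/

import Mathlib

lemma msb_testBit_self (x : ℕ) (hx : x ≠ 0) : x.testBit x.log2 = true := by
  have h1 : 2 ^ x.log2 ≤ x := Nat.log2_self_le hx
  have h2 : x < 2 ^ (x.log2 + 1) := by
    rw [← Nat.log2_lt hx]; omega
  rw [Nat.testBit_eq_decide_div_mod_eq]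
  have : x / 2 ^ x.log2 = 1 := by
    have hlo : 1 ≤ x / 2 ^ x.log2 := (Nat.one_le_div_iff (Nat.pow_pos (by norm_num))).2 h1
    have hhi : x / 2 ^ x.log2 < 2 := by
      rw [Nat.div_lt_iff_lt_mul (Nat.pow_pos (by norm_num))]
      calc x < 2 ^ (x.log2 + 1) := h2
        _ = 2 ^ x.log2 * 2 := by rw [pow_succ]
        _ = 2 * 2 ^ x.log2 := by ring
    omega
  simp [this]

lemma msb_testBit_high (x q : ℕ) (h : x.log2 < q) : x.testBit q = false := by
  rcases eq_or_ne x 0 with rfl | hx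
  · simp
  · exact Nat.testBit_lt_two_pow ((Nat.log2_lt hx).1 h)

lemma step_bits {a b : ℕ} (hab : a < b) :
    a.testBit (a ^^^ b).log2 = false ∧ b.testBit (a ^^^ b).log2 = true := by
  set x := a ^^^ b with hx
  have hxne : x ≠ 0 := by
    intro h
    have : b = a := by
      rw [← Nat.zero_xor b, ← Nat.xor_self a, Nat.xor_assoc, ← hx, h, Nat.xor_zero]
    omega
  have hbit : x.testBit x.log2 = true := msb_testBit_self x hxne
  have hdiff : (a.testBit x.log2).xor (b.testBit x.log2) = true := by
    rwa [← Nat.testBit_xor]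
  have hhigh : ∀ q, x.log2 < q → a.testBit q = b.testBit q := by
    intro q hq
    have h := msb_testBit_high x q hq
    rw [Nat.testBit_xor] at h
    revert h
    cases a.testBit q <;> cases b.testBit q <;> simp
  cases ha : a.testBit x.log2 <;> cases hb : b.testBit x.log2
  · rw [Nat.testBit_xor, ha, hb] at hbit; simp at hbit
  · exact ⟨rfl, rfl⟩
  · exfalso
    have : b < a := Nat.lt_of_testBit x.log2 hb ha (fun j hj => (hhigh j hj).symm)
    omega
  · rw [Nat.testBit_xor, ha, hb] at hbit; simp at hbit

/-- Let `W 0 < W 1 < … < W n` be strictly increasing naturals, and for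
    `1 ≤ i ≤ n` let `p i = Nat.log2 (W (i-1) ^^^ W i)`. Then whenever
    `1 ≤ i < j ≤ n` and `p i = p j`, there is `k` with `i < k < j` and
    `p k > p i`. -/
theorem msb_sequence_condition (n : ℕ) (W : ℕ → ℕ)
    (hW : ∀ i < n, W i < W (i + 1)) :
    ∀ i j : ℕ, 1 ≤ i → i < j → j ≤ n →
      Nat.log2 (W (i - 1) ^^^ W i) = Nat.log2 (W (j - 1) ^^^ W j) →
      ∃ k : ℕ, i < k ∧ k < j ∧
        Nat.log2 (W (i - 1) ^^^ W i) < Nat.log2 (W (k - 1) ^^^ W k) := by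
  intro i j hi hij hjn hp
  set p := Nat.log2 (W (i - 1) ^^^ W i) with hpdef
  -- W increasing on steps
  have hstep : ∀ k, 1 ≤ k → k ≤ n → W (k - 1) < W k := by
    intro k h1 h2
    have := hW (k - 1) (by omega)
    have hk : k - 1 + 1 = k := by omega
    rwa [hk] at this
  have hi_bits := step_bits (hstep i hi (by omega))
  have hj_bits := step_bits (hstep j (by omega) hjn)
  rw [← hpdef] at hi_bits
  rw [← hp] at hj_bits
  -- (W i).testBit p = true, (W (j-1)).testBit p = false
  have hWi : (W i).testBit p = true := hi_bits.2
  have hWj1 : (W (j - 1)).testBit p = false := hj_bits.1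
  -- find minimal k > i with testBit p (W k) = false
  have hex : ∃ k, i < k ∧ (W k).testBit p = false := by
    refine ⟨j - 1, ?_, hWj1⟩
    by_contra h
    have : j - 1 = i := by omega
    rw [this] at hWj1
    rw [hWi] at hWj1
    exact absurd hWj1 (by simp)
  classical
  set k := Nat.find hex with hkdef
  obtain ⟨hik, hkbit⟩ : i < k ∧ (W k).testBit p = false := Nat.find_spec hex
  have hkle : k ≤ j - 1 := Nat.find_min' hex ⟨by
      by_contra h
      have : j - 1 = i := by omega
      rw [this, hWi] at hWj1
      simp at hWj1, hWj1⟩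
  have hkj : k < j := by omega
  have hk1bit : (W (k - 1)).testBit p = true := by
    rcases eq_or_lt_of_le (Nat.succ_le_of_lt hik) with h | h
    · have : k - 1 = i := by omega
      rw [this]; exact hWi
    · have hlt : k - 1 < k := by omega
      have := Nat.find_min hex hlt
      push_neg at this
      have := this (by omega)
      cases hb : (W (k - 1)).testBit p with
      | true => rfl
      | false => exact absurd hb this
  -- now show p < log2 (W (k-1) ^^^ W k)
  have hkstep := step_bits (hstep k (by omega) (by omega))
  set q := Nat.log2 (W (k - 1) ^^^ W k) with hqdef
  have hxorbit : (W (k - 1) ^^^ W k).testBit p = true := by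
    rw [Nat.testBit_xor, hk1bit, hkbit]; rfl
  have hpq : p ≤ q := by
    by_contra h
    push_neg at h
    rw [msb_testBit_high _ _ h] at hxorbit
    simp at hxorbit
  have hpne : p ≠ q := by
    intro h
    rw [h] at hk1bit
    rw [hkstep.1] at hk1bit
    simp at hk1bit
  exact ⟨k, hik, hkj, lt_of_le_of_ne hpq hpne⟩
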